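/- Let G be an infinite, connected, locally finite simple graph and let p ≥ 2 be a natural number such that every vertex of G has degree at most p. Then the physical Cheeger constant of G satisfies α(G) ≤ p − 2; that is, the infimum over all finite nonempty vertex sets W of |∂_E W|/|W| is at most p − 2. -/
import Mathlib

def edgeBdry {V : Type*} (G : SimpleGraph V) (W : Set V) : Set (Sym2 V) :=
  {e | e ∈ G.edgeSet ∧ ∃ v w : V, e = s(v, w) ∧ v ∈ W ∧ w ∉ W}

section aux
open scoped Classical
variable {V : Type*} (G : SimpleGraph V) (hlf : ∀ v : V, (G.neighborSet v).Finite)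

noncomputable def pairsF (W : Finset V) : Finset (V × V) :=
  W.biUnion (fun v => ((hlf v).toFinset.image (fun w => (v, w))))

lemma mem_pairsF {W : Finset V} {x : V × V} :
    x ∈ pairsF G hlf W ↔ x.1 ∈ W ∧ G.Adj x.1 x.2 := by
  simp only [pairsF, Finset.mem_biUnion, Finset.mem_image, Set.Finite.mem_toFinset,
    SimpleGraph.mem_neighborSet]
  constructor
  · rintro ⟨v, hv, w, hw, rfl⟩; exact ⟨hv, hw⟩
  · rintro ⟨h1, h2⟩; exact ⟨x.1, h1, x.2, h2, rfl⟩

lemma exists_cross {a b : V} (q : G.Walk a b) (S : Finset V) (ha : a ∈ S) (hb : b ∉ S) :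
    ∃ v ∈ S, ∃ w, w ∉ S ∧ G.Adj v w := by
  induction q with
  | nil => exact absurd ha hb
  | @cons u c d h q ih =>
    by_cases hc : c ∈ S
    · exact ih hc hb
    · exact ⟨u, ha, c, hc, h⟩

lemma pairsF_card_le {p : ℕ} (hdeg : ∀ v : V, (G.neighborSet v).encard ≤ p)
    (W : Finset V) : (pairsF G hlf W).card ≤ p * W.card := by
  have hdisj : (W : Set V).PairwiseDisjoint
      (fun v => ((hlf v).toFinset.image (fun w => (v, w)))) := by
    intro a _ b _ hab
    simp only [Finset.disjoint_left, Finset.mem_image]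
    rintro x ⟨w, _, rfl⟩ ⟨w', _, h⟩
    exact hab (congrArg Prod.fst h).symm
  rw [pairsF, Finset.card_biUnion hdisj]
  calc ∑ v ∈ W, ((hlf v).toFinset.image (fun w => (v, w))).card
      ≤ ∑ _v ∈ W, p := by
        refine Finset.sum_le_sum fun v _ => ?_
        have h1 : ((hlf v).toFinset.image (fun w => (v, w))).card ≤ (hlf v).toFinset.card :=
          Finset.card_image_le
        have h2 : (hlf v).toFinset.card ≤ p := by
          have := hdeg v
          rwa [Set.Finite.encard_eq_coe_toFinset_card (hlf v), Nat.cast_le] at this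
        exact h1.trans h2
    _ = p * W.card := by rw [Finset.sum_const, smul_eq_mul, mul_comm]

lemma bdry_ncard_eq (W : Finset V) :
    (edgeBdry G (W : Set V)).ncard
      = ((pairsF G hlf W).filter (fun x => x.2 ∉ W)).card := by
  have hset : edgeBdry G (W : Set V)
      = ↑(((pairsF G hlf W).filter (fun x => x.2 ∉ W)).image (fun x => s(x.1, x.2))) := by
    ext e
    simp only [Finset.coe_image, Set.mem_image, Finset.mem_coe, Finset.mem_filter,
      mem_pairsF, edgeBdry, Set.mem_setOf_eq]
    constructor
    · rintro ⟨he, v, w, rfl, hv, hw⟩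
      refine ⟨(v, w), ⟨⟨hv, ?_⟩, hw⟩, rfl⟩
      exact (SimpleGraph.mem_edgeSet G).mp he
    · rintro ⟨⟨v, w⟩, ⟨⟨hv, hadj⟩, hw⟩, rfl⟩
      exact ⟨(SimpleGraph.mem_edgeSet G).mpr hadj, v, w, rfl, hv, hw⟩
  rw [hset, Set.ncard_coe_finset]
  refine Finset.card_image_of_injOn ?_
  rintro ⟨a, b⟩ hab ⟨c, d⟩ hcd h
  simp only [Finset.mem_coe, Finset.mem_filter, mem_pairsF] at hab hcd
  rcases Sym2.eq_iff.mp h with ⟨rfl, rfl⟩ | ⟨rfl, rfl⟩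
  · rfl
  · exact absurd hab.1.1 hcd.2

lemma exists_good (hconn : G.Connected) [Infinite V] (n : ℕ) :
    ∃ W : Finset V, W.card = n + 1 ∧
      2 * n ≤ ((pairsF G hlf W).filter (fun x => x.2 ∈ W)).card := by
  induction n with
  | zero =>
    obtain ⟨v⟩ := (inferInstance : Nonempty V)
    exact ⟨{v}, Finset.card_singleton v, Nat.zero_le _⟩
  | succ n ih =>
    obtain ⟨W, hcard, hint⟩ := ih
    have hne : W.Nonempty := Finset.card_pos.mp (by omega)
    obtain ⟨a, ha⟩ := hne
    obtain ⟨u, hu⟩ := W.exists_notMem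
    obtain ⟨v, hv, w, hw, hadj⟩ :=
      exists_cross G ((hconn.preconnected a u).some) W ha hu
    refine ⟨insert w W, ?_, ?_⟩
    · rw [Finset.card_insert_of_notMem hw, hcard]
    · set Fi := (pairsF G hlf W).filter (fun x => x.2 ∈ W) with hFi
      set Fi' := (pairsF G hlf (insert w W)).filter (fun x => x.2 ∈ insert w W) with hFi'
      have hsub : insert (v, w) (insert (w, v) Fi) ⊆ Fi' := by
        intro x hx
        simp only [Finset.mem_insert] at hx
        simp only [hFi', Finset.mem_filter, mem_pairsF]
        rcases hx with rfl | rfl | hx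
        · exact ⟨⟨Finset.mem_insert_of_mem hv, hadj⟩, Finset.mem_insert_self _ _⟩
        · exact ⟨⟨Finset.mem_insert_self _ _, hadj.symm⟩, Finset.mem_insert_of_mem hv⟩
        · simp only [hFi, Finset.mem_filter, mem_pairsF] at hx
          exact ⟨⟨Finset.mem_insert_of_mem hx.1.1, hx.1.2⟩, Finset.mem_insert_of_mem hx.2⟩
      have h1 : (w, v) ∉ Fi := by
        simp only [hFi, Finset.mem_filter, mem_pairsF]
        intro h; exact hw h.1.1
      have h2 : (v, w) ∉ insert (w, v) Fi := by
        simp only [Finset.mem_insert, hFi, Finset.mem_filter, mem_pairsF]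
        rintro (h | h)
        · exact absurd (congrArg Prod.fst h) hadj.ne
        · exact hw h.2
      have hcards : Fi.card + 2 ≤ Fi'.card := by
        have := Finset.card_le_card hsub
        rw [Finset.card_insert_of_notMem h2, Finset.card_insert_of_notMem h1] at this
        omega
      omega

end aux

theorem cheeger_le_of_degree_le {V : Type*} [Infinite V] (G : SimpleGraph V)
    (hconn : G.Connected) (hlf : ∀ v : V, (G.neighborSet v).Finite)
    (p : ℕ) (hp : 2 ≤ p) (hdeg : ∀ v : V, (G.neighborSet v).encard ≤ p) :
    sInf {r : ℝ | ∃ W : Finset V, W.Nonempty ∧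
        r = ((edgeBdry G (W : Set V)).ncard : ℝ) / (W.card : ℝ)} ≤ (p : ℝ) - 2 := by
  classical
  set S : Set ℝ := {r : ℝ | ∃ W : Finset V, W.Nonempty ∧
      r = ((edgeBdry G (W : Set V)).ncard : ℝ) / (W.card : ℝ)} with hS
  have hbdd : BddBelow S := by
    refine ⟨0, ?_⟩
    rintro r ⟨W, hW, rfl⟩
    positivity
  refine le_of_forall_pos_le_add fun ε hε => ?_
  obtain ⟨n, hn⟩ := exists_nat_gt (2 / ε)
  obtain ⟨W, hcard, hint⟩ := exists_good G hlf hconn n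
  have hWne : W.Nonempty := Finset.card_pos.mp (by omega)
  have hmem : ((edgeBdry G (W : Set V)).ncard : ℝ) / (W.card : ℝ) ∈ S := ⟨W, hWne, rfl⟩
  have hsplit : ((pairsF G hlf W).filter (fun x => x.2 ∈ W)).card
      + ((pairsF G hlf W).filter (fun x => x.2 ∉ W)).card = (pairsF G hlf W).card :=
    Finset.card_filter_add_card_filter_not _
  have htot := pairsF_card_le G hlf hdeg W
  have hnat : ((pairsF G hlf W).filter (fun x => x.2 ∉ W)).card + 2 * n ≤ p * (n + 1) := by
    rw [hcard] at htot; omega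
  have hb := bdry_ncard_eq G hlf W
  have hreal : ((edgeBdry G (W : Set V)).ncard : ℝ) ≤ p * (n + 1) - 2 * n := by
    rw [hb]
    have := (Nat.cast_le (α := ℝ)).mpr hnat
    push_cast at this ⊢
    linarith
  have hnpos : (0 : ℝ) < (n : ℝ) + 1 := by positivity
  have hwc : (W.card : ℝ) = (n : ℝ) + 1 := by rw [hcard]; push_cast; ring
  have hkey : ((edgeBdry G (W : Set V)).ncard : ℝ) / (W.card : ℝ)
      ≤ (p : ℝ) - 2 + 2 / ((n : ℝ) + 1) := by
    rw [hwc, div_le_iff₀ hnpos]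
    have heq : ((p : ℝ) - 2 + 2 / ((n : ℝ) + 1)) * ((n : ℝ) + 1)
        = (p : ℝ) * ((n : ℝ) + 1) - 2 * (n : ℝ) := by
      field_simp; ring
    rw [heq]; exact hreal
  have hεn : 2 / ((n : ℝ) + 1) ≤ ε := by
    rw [div_le_iff₀ hnpos]
    have h2 : 2 < ε * n := by
      have := (div_lt_iff₀ hε).mp hn
      linarith
    nlinarith
  calc sInf S ≤ _ := csInf_le hbdd hmem
    _ ≤ (p : ℝ) - 2 + 2 / ((n : ℝ) + 1) := hkey
    _ ≤ (p : ℝ) - 2 + ε := by linarith
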